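/- Every orthonormal basis of ℂ² ⊗ ℂ² consisting entirely of product vectors is, up to swapping the two tensor factors, local-unitary equivalent to a basis of the form {|0⟩|0⟩, |0⟩|1⟩, |1⟩|e₀⟩, |1⟩|e₁⟩} where {|e₀⟩, |e₁⟩} is some orthonormal basis of ℂ². -/

import Mathlib

open Matrix

noncomputable section

/-- Vectors of `ℂ² ⊗ ℂ²` in the product basis. -/
abbrev V2 := Fin 2 × Fin 2 → ℂ

/-- Rank-1 projector `|ψ⟩⟨ψ|` of a bipartite vector. -/
def proj (ψ : V2) : Matrix (Fin 2 × Fin 2) (Fin 2 × Fin 2) ℂ :=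
  Matrix.of fun p q => ψ p * star (ψ q)

/-- Action of a local operator `u ⊗ v` on a bipartite vector. -/
def act (u v : Matrix (Fin 2) (Fin 2) ℂ) (ψ : V2) : V2 :=
  fun p => ∑ q : Fin 2 × Fin 2, u p.1 q.1 * v p.2 q.2 * ψ q

/-- Swap of the two tensor factors. -/
def swapV (ψ : V2) : V2 := fun p => ψ (p.2, p.1)

/-- Computational basis vector `|i⟩` of `ℂ²`. -/
def std (i : Fin 2) : Fin 2 → ℂ := fun j => if j = i then 1 else 0

/-- Product vector `|u⟩ ⊗ |v⟩`. -/
def prodv (u v : Fin 2 → ℂ) : V2 := fun p => u p.1 * v p.2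

/-- The family `{|0⟩|0⟩, |0⟩|1⟩, |1⟩|e₀⟩, |1⟩|e₁⟩}`. -/
def targetFam (e : Fin 2 → Fin 2 → ℂ) : Fin 4 → V2 :=
  ![prodv (std 0) (std 0), prodv (std 0) (std 1), prodv (std 1) (e 0), prodv (std 1) (e 1)]

/-- Every orthonormal basis of `ℂ² ⊗ ℂ²` consisting entirely of product vectors is, up to
swapping the two tensor factors, local-unitary equivalent to a basis of the form
`{|0⟩|0⟩, |0⟩|1⟩, |1⟩|e₀⟩, |1⟩|e₁⟩}` for some orthonormal basis `{|e₀⟩, |e₁⟩}` of `ℂ²`. -/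
def ip (x y : Fin 2 → ℂ) : ℂ := ∑ p, star (x p) * y p
def ip2 (x y : V2) : ℂ := ∑ p, star (x p) * y p

lemma ip_expand (x y : Fin 2 → ℂ) : ip x y = star (x 0) * y 0 + star (x 1) * y 1 := by
  simp [ip, Fin.sum_univ_two]

lemma prod_ip (u v u' v' : Fin 2 → ℂ) :
    ip2 (prodv u v) (prodv u' v') = ip u u' * ip v v' := by
  simp only [ip2, ip, prodv, Fintype.sum_prod_type]
  rw [Finset.sum_mul_sum]
  exact Finset.sum_congr rfl fun i _ => Finset.sum_congr rfl fun j _ => by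
    simp [star_mul']; ring

lemma star_ip (x y : Fin 2 → ℂ) : star (ip x y) = ip y x := by
  simp [ip_expand, star_mul', mul_comm]

lemma ip_comm_zero {x y : Fin 2 → ℂ} (h : ip x y = 0) : ip y x = 0 := by
  rw [← star_ip, h, star_zero]

lemma ip_smul_right (x y : Fin 2 → ℂ) (t : ℂ) : ip x (t • y) = t * ip x y := by
  simp [ip_expand]; ring

lemma ip_smul_left (x y : Fin 2 → ℂ) (t : ℂ) : ip (t • x) y = star t * ip x y := by
  simp [ip_expand, star_mul']; ring

lemma ne01 {x : Fin 2 → ℂ} (hx : ip x x ≠ 0) : x 0 ≠ 0 ∨ x 1 ≠ 0 := by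
  by_contra h
  push_neg at h
  exact hx (by simp [ip_expand, h.1, h.2])

lemma det_zero_of {a b c : Fin 2 → ℂ} (hb : ip a b = 0) (hc : ip a c = 0)
    (ha : ip a a ≠ 0) : b 0 * c 1 = b 1 * c 0 := by
  rw [ip_expand] at hb hc
  rcases ne01 ha with h | h
  · have hs : star (a 0) ≠ 0 := star_ne_zero.2 h
    have : star (a 0) * (b 0 * c 1 - b 1 * c 0) = 0 := by linear_combination c 1 * hb - b 1 * hc
    have := (mul_eq_zero.1 this).resolve_left hs
    linear_combination this
  · have hs : star (a 1) ≠ 0 := star_ne_zero.2 h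
    have : star (a 1) * (b 0 * c 1 - b 1 * c 0) = 0 := by linear_combination b 0 * hc - c 0 * hb
    have := (mul_eq_zero.1 this).resolve_left hs
    linear_combination this

lemma eq_zero_of_ip_det {a c : Fin 2 → ℂ} (hip : ip a c = 0)
    (hdet : a 0 * c 1 = a 1 * c 0) (ha : ip a a ≠ 0) : c = 0 := by
  rw [ip_expand] at hip
  have h0 : ip a a * c 0 = a 0 * (star (a 0) * c 0 + star (a 1) * c 1) := by
    rw [ip_expand]; linear_combination (- star (a 1)) * hdet
  have h1 : ip a a * c 1 = a 1 * (star (a 0) * c 0 + star (a 1) * c 1) := by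
    rw [ip_expand]; linear_combination (star (a 0)) * hdet
  rw [hip, mul_zero] at h0 h1
  funext i
  fin_cases i
  · exact (mul_eq_zero.1 h0).resolve_left ha
  · exact (mul_eq_zero.1 h1).resolve_left ha

lemma eq_zero_of_orth3 {a b c : Fin 2 → ℂ} (hab : ip a b = 0) (hac : ip a c = 0)
    (hbc : ip b c = 0) (ha : ip a a ≠ 0) (hb : ip b b ≠ 0) : c = 0 :=
  eq_zero_of_ip_det hbc (det_zero_of hab hac ha) hb

lemma exists_smul_of_det {x y : Fin 2 → ℂ} (hdet : x 0 * y 1 = x 1 * y 0)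
    (hx : ip x x ≠ 0) : ∃ t : ℂ, y = t • x := by
  rcases ne01 hx with h | h
  · exact ⟨(y 0 / x 0 : ℂ), by funext i; fin_cases i <;> simp only [Pi.smul_apply, smul_eq_mul, Fin.zero_eta, Fin.mk_one] <;> field_simp <;> linear_combination hdet⟩
  · exact ⟨(y 1 / x 1 : ℂ), by funext i; fin_cases i <;> simp only [Pi.smul_apply, smul_eq_mul, Fin.zero_eta, Fin.mk_one] <;> field_simp <;> linear_combination -hdet⟩

lemma ip_self_ofReal (x : Fin 2 → ℂ) :
    ip x x = Complex.ofReal (Complex.normSq (x 0) + Complex.normSq (x 1)) := by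
  rw [ip_expand]
  simp [Complex.star_def, Complex.normSq_eq_conj_mul_self]

lemma exists_normalizer {x : Fin 2 → ℂ} (hx : ip x x ≠ 0) :
    ∃ c : ℂ, star c = c ∧ star c * c * ip x x = 1 := by
  set n : ℝ := Complex.normSq (x 0) + Complex.normSq (x 1) with hn
  have hipn : ip x x = Complex.ofReal n := ip_self_ofReal x
  have hne : n ≠ 0 := fun h => hx (by rw [hipn, h]; simp)
  have hnpos : 0 < n :=
    (add_nonneg (Complex.normSq_nonneg (x 0)) (Complex.normSq_nonneg (x 1))).lt_of_ne (Ne.symm hne)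
  refine ⟨Complex.ofReal ((Real.sqrt n)⁻¹), by simp [Complex.conj_ofReal], ?_⟩
  rw [hipn]
  simp only [Complex.conj_ofReal, RCLike.star_def]
  rw [← Complex.ofReal_mul, ← Complex.ofReal_mul]
  rw [show (Real.sqrt n)⁻¹ * (Real.sqrt n)⁻¹ * n = n / (Real.sqrt n * Real.sqrt n) by ring,
    Real.mul_self_sqrt hnpos.le]
  simp [div_self hnpos.ne']


/-- Matrix with rows `c0 • star x0` and `c1 • star x1`. -/
def mk (c0 c1 : ℂ) (x0 x1 : Fin 2 → ℂ) : Matrix (Fin 2) (Fin 2) ℂ :=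
  Matrix.of ![![c0 * star (x0 0), c0 * star (x0 1)], ![c1 * star (x1 0), c1 * star (x1 1)]]

lemma mk_mulVec (c0 c1 : ℂ) (x0 x1 z : Fin 2 → ℂ) :
    (mk c0 c1 x0 x1).mulVec z = ![c0 * ip x0 z, c1 * ip x1 z] := by
  funext i
  fin_cases i <;>
    simp [mk, Matrix.mulVec, dotProduct, Fin.sum_univ_two, ip_expand] <;> ring

lemma mk_unitary {c0 c1 : ℂ} {x0 x1 : Fin 2 → ℂ}
    (h0 : star c0 * c0 * ip x0 x0 = 1) (h1 : star c1 * c1 * ip x1 x1 = 1)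
    (h01 : ip x0 x1 = 0) : (mk c0 c1 x0 x1)ᴴ * (mk c0 c1 x0 x1) = 1 := by
  rw [mul_eq_one_comm]
  have h10 : ip x1 x0 = 0 := ip_comm_zero h01
  rw [ip_expand] at h0 h1 h01 h10
  simp only [Complex.star_def] at h0 h1 h01 h10
  ext i j
  fin_cases i <;> fin_cases j <;>
    simp only [mk, Matrix.mul_apply, Matrix.conjTranspose_apply, Fin.sum_univ_two,
      Matrix.one_apply, Matrix.of_apply, Complex.star_def, _root_.map_mul, Complex.conj_conj,
      Matrix.cons_val', Matrix.cons_val_zero, Matrix.cons_val_one, Matrix.head_cons,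
      Matrix.head_fin_const, Matrix.empty_val', Matrix.cons_val_fin_one,
      Fin.mk_zero, Fin.mk_one, if_true, eq_self_iff_true]
  · linear_combination h0
  · rw [if_neg (by decide)]; linear_combination (c0 * (starRingEnd ℂ) c1) * h01
  · rw [if_neg (by decide)]; linear_combination (c1 * (starRingEnd ℂ) c0) * h10
  · linear_combination h1

lemma mulVec_ip {A : Matrix (Fin 2) (Fin 2) ℂ} (hA : Aᴴ * A = 1) (x y : Fin 2 → ℂ) :
    ip (A.mulVec x) (A.mulVec y) = ip x y := by
  have h : ∀ i j, (Aᴴ * A) i j = (1 : Matrix (Fin 2) (Fin 2) ℂ) i j := fun i j => by rw [hA]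
  have h00 := h 0 0
  have h01 := h 0 1
  have h10 := h 1 0
  have h11 := h 1 1
  simp [Matrix.mul_apply, Matrix.conjTranspose_apply, Fin.sum_univ_two,
    Matrix.one_apply, Complex.star_def] at h00 h01 h10 h11
  simp only [ip, Fin.sum_univ_two, Matrix.mulVec, dotProduct, Complex.star_def,
    map_add, _root_.map_mul]
  linear_combination (starRingEnd ℂ) (x 0) * y 0 * h00 + (starRingEnd ℂ) (x 0) * y 1 * h01 +
    (starRingEnd ℂ) (x 1) * y 0 * h10 + (starRingEnd ℂ) (x 1) * y 1 * h11

lemma act_prodv (u v : Matrix (Fin 2) (Fin 2) ℂ) (x y : Fin 2 → ℂ) :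
    act u v (prodv x y) = prodv (u.mulVec x) (v.mulVec y) := by
  funext p
  simp only [act, prodv, Fintype.sum_prod_type, Matrix.mulVec, dotProduct,
    Fin.sum_univ_two]
  ring

lemma prodv_smul_left (s : ℂ) (x y : Fin 2 → ℂ) : prodv (s • x) y = s • prodv x y := by
  funext p; simp [prodv]; ring

lemma prodv_smul_right (s : ℂ) (x y : Fin 2 → ℂ) : prodv x (s • y) = s • prodv x y := by
  funext p; simp [prodv]; ring

lemma proj_smul {s : ℂ} (hs : star s * s = 1) (ψ : V2) : proj (s • ψ) = proj ψ := by
  ext p q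
  simp only [Complex.star_def] at hs
  simp only [proj, Pi.smul_apply, smul_eq_mul, Matrix.of_apply, Complex.star_def, _root_.map_mul]
  linear_combination ψ p * (starRingEnd ℂ) (ψ q) * hs

lemma vec_s0 (s : ℂ) : (![s, 0] : Fin 2 → ℂ) = s • std 0 := by
  funext i; fin_cases i <;> simp [std]

lemma vec_0s (s : ℂ) : (![0, s] : Fin 2 → ℂ) = s • std 1 := by
  funext i; fin_cases i <;> simp [std]

lemma swapV_prodv (x y : Fin 2 → ℂ) : swapV (prodv x y) = prodv y x := by
  funext p; simp [swapV, prodv]; ring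

lemma ip2_swap (x y : V2) : ip2 (swapV x) (swapV y) = ip2 x y := by
  simp [ip2, swapV, Fintype.sum_prod_type, Fin.sum_univ_two]; ring

lemma ip_self_zero (x : Fin 2 → ℂ) (h : x = 0) : ip x x = 0 := by
  rw [h]; simp [ip_expand]

lemma ip_smul_std1 (s s' : ℂ) : ip (s • std 1) (s' • std 1) = star s * s' := by
  simp [ip_expand, std]

lemma main_lemma (a b : Fin 4 → Fin 2 → ℂ)
    (horth : ∀ c c', ip2 (prodv (a c) (b c)) (prodv (a c') (b c')) = if c = c' then 1 else 0)
    (h1 : ip (a 0) (a 1) = 0) (h2 : ip (a 0) (a 2) = 0) :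
    ∃ e : Fin 2 → Fin 2 → ℂ,
      (∀ i j, ip (e i) (e j) = if i = j then 1 else 0) ∧
      ∃ u v : Matrix (Fin 2) (Fin 2) ℂ, uᴴ * u = 1 ∧ vᴴ * v = 1 ∧
        (Set.range fun c => proj (act u v (prodv (a c) (b c)))) =
          Set.range fun c => proj (targetFam e c) := by
  have hnorm : ∀ c, ip (a c) (a c) * ip (b c) (b c) = 1 := fun c => by
    have := horth c c; rwa [prod_ip, if_pos rfl] at this
  have Na : ∀ c, ip (a c) (a c) ≠ 0 := fun c => left_ne_zero_of_mul_eq_one (hnorm c)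
  have Nb : ∀ c, ip (b c) (b c) ≠ 0 := fun c => right_ne_zero_of_mul_eq_one (hnorm c)
  have dich : ∀ c c', c ≠ c' → ip (a c) (a c') = 0 ∨ ip (b c) (b c') = 0 := fun c c' h => by
    have := horth c c'; rw [prod_ip, if_neg h] at this; exact mul_eq_zero.1 this
  have hb12 : ip (b 1) (b 2) = 0 := by
    rcases dich 1 2 (by decide) with h | h
    · exact absurd (ip_self_zero _ (eq_zero_of_ip_det h (det_zero_of h1 h2 (Na 0)) (Na 1))) (Na 2)
    · exact h
  have hb03 : ip (b 0) (b 3) = 0 := by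
    rcases dich 0 3 (by decide) with ha03 | h
    · exfalso
      have d13 := det_zero_of h1 ha03 (Na 0)
      have d23 := det_zero_of h2 ha03 (Na 0)
      have hb13 : ip (b 1) (b 3) = 0 := by
        rcases dich 1 3 (by decide) with h' | h'
        · exact absurd (ip_self_zero _ (eq_zero_of_ip_det h' d13 (Na 1))) (Na 3)
        · exact h'
      have hb23 : ip (b 2) (b 3) = 0 := by
        rcases dich 2 3 (by decide) with h' | h'
        · exact absurd (ip_self_zero _ (eq_zero_of_ip_det h' d23 (Na 2))) (Na 3)
        · exact h'
      exact absurd (ip_self_zero _ (eq_zero_of_orth3 hb12 hb13 hb23 (Nb 1) (Nb 2))) (Nb 3)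
    · exact h
  have hdet03 : a 0 0 * a 3 1 = a 0 1 * a 3 0 := by
    rcases dich 1 3 (by decide) with h' | hb13
    · exact det_zero_of (ip_comm_zero h1) h' (Na 1)
    · rcases dich 2 3 (by decide) with h'' | hb23
      · exact det_zero_of (ip_comm_zero h2) h'' (Na 2)
      · exact absurd (ip_self_zero _ (eq_zero_of_orth3 hb12 hb13 hb23 (Nb 1) (Nb 2))) (Nb 3)
  obtain ⟨t, ht⟩ := exists_smul_of_det hdet03 (Na 0)
  obtain ⟨c0, hc0s, hc0⟩ := exists_normalizer (Na 0)
  obtain ⟨c1, hc1s, hc1⟩ := exists_normalizer (Na 1)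
  obtain ⟨d0, hd0s, hd0⟩ := exists_normalizer (Nb 0)
  obtain ⟨d1, hd1s, hd1⟩ := exists_normalizer (Nb 3)
  set u := mk c0 c1 (a 0) (a 1) with hu_def
  set v := mk d0 d1 (b 0) (b 3) with hv_def
  have hu : uᴴ * u = 1 := mk_unitary hc0 hc1 h1
  have hv : vᴴ * v = 1 := mk_unitary hd0 hd1 hb03
  set s1 := c1 * ip (a 1) (a 1) with hs1_def
  set s2 := c1 * ip (a 1) (a 2) with hs2_def
  -- mulVec computations
  have hu0 : u.mulVec (a 0) = (c0 * ip (a 0) (a 0)) • std 0 := by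
    rw [hu_def, mk_mulVec, ip_comm_zero h1, mul_zero, vec_s0]
  have hu1 : u.mulVec (a 1) = s1 • std 1 := by
    rw [hu_def, mk_mulVec, h1, mul_zero, vec_0s]
  have hu2 : u.mulVec (a 2) = s2 • std 1 := by
    rw [hu_def, mk_mulVec, h2, mul_zero, vec_0s]
  have hu3 : u.mulVec (a 3) = (c0 * (t * ip (a 0) (a 0))) • std 0 := by
    rw [hu_def, mk_mulVec, ht, ip_smul_right, ip_smul_right, ip_comm_zero h1,
      mul_zero, mul_zero, vec_s0]
  have hv0 : v.mulVec (b 0) = (d0 * ip (b 0) (b 0)) • std 0 := by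
    rw [hv_def, mk_mulVec, ip_comm_zero hb03, mul_zero, vec_s0]
  have hv3 : v.mulVec (b 3) = (d1 * ip (b 3) (b 3)) • std 1 := by
    rw [hv_def, mk_mulVec, hb03, mul_zero, vec_0s]
  -- the orthonormal basis e
  refine ⟨![s1 • v.mulVec (b 1), s2 • v.mulVec (b 2)], ?_, ?_⟩
  · -- orthonormality of e
    have ps1 : star s1 * s1 = ip (a 1) (a 1) := by
      have := mulVec_ip hu (a 1) (a 1)
      rwa [hu1, ip_smul_std1] at this
    have ps2 : star s2 * s2 = ip (a 2) (a 2) := by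
      have := mulVec_ip hu (a 2) (a 2)
      rwa [hu2, ip_smul_std1] at this
    intro i j
    fin_cases i <;> fin_cases j <;>
      simp only [Matrix.cons_val_zero, Matrix.cons_val_one, Matrix.head_cons,
        ip_smul_left, ip_smul_right, mulVec_ip hv, Fin.mk_zero, Fin.mk_one]
    · rw [if_pos trivial]
      linear_combination ip (b 1) (b 1) * ps1 + hnorm 1
    · rw [if_neg (by decide), hb12]; ring
    · rw [if_neg (by decide), ip_comm_zero hb12]; ring
    · rw [if_pos trivial]
      linear_combination ip (b 2) (b 2) * ps2 + hnorm 2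
  · -- the range equality
    refine ⟨u, v, hu, hv, ?_⟩
    have sip : ∀ x : Fin 2 → ℂ, star (ip x x) = ip x x := fun x => star_ip x x
    have hph0 : star ((c0 * ip (a 0) (a 0)) * (d0 * ip (b 0) (b 0))) *
        ((c0 * ip (a 0) (a 0)) * (d0 * ip (b 0) (b 0))) = 1 := by
      simp only [star_mul', sip]
      linear_combination (star d0 * d0 * ip (b 0) (b 0) * ip (a 0) (a 0) * ip (b 0) (b 0)) * hc0
        + (ip (a 0) (a 0) * ip (b 0) (b 0)) * hd0 + hnorm 0
    have hta : star t * t * ip (a 0) (a 0) * ip (b 3) (b 3) = 1 := by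
      have : ip (a 3) (a 3) = star t * t * ip (a 0) (a 0) := by
        rw [ht, ip_smul_left, ip_smul_right]; ring
      rw [← this]; exact hnorm 3
    have hph3 : star ((c0 * (t * ip (a 0) (a 0))) * (d1 * ip (b 3) (b 3))) *
        ((c0 * (t * ip (a 0) (a 0))) * (d1 * ip (b 3) (b 3))) = 1 := by
      simp only [star_mul', sip]
      linear_combination
        (star d1 * d1 * ip (b 3) (b 3) * star t * t * ip (a 0) (a 0) * ip (b 3) (b 3)) * hc0
        + (star t * t * ip (a 0) (a 0) * ip (b 3) (b 3)) * hd1 + hta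
    have P0 : proj (act u v (prodv (a 0) (b 0))) = proj (targetFam ![s1 • v.mulVec (b 1), s2 • v.mulVec (b 2)] 0) := by
      rw [act_prodv, hu0, hv0, prodv_smul_left, prodv_smul_right, smul_smul, proj_smul]
      · simp [targetFam]
      · exact hph0
    have P3 : proj (act u v (prodv (a 3) (b 3))) = proj (targetFam ![s1 • v.mulVec (b 1), s2 • v.mulVec (b 2)] 1) := by
      rw [act_prodv, hu3, hv3, prodv_smul_left, prodv_smul_right, smul_smul, proj_smul]
      · simp [targetFam]
      · exact hph3
    have P1 : proj (act u v (prodv (a 1) (b 1))) = proj (targetFam ![s1 • v.mulVec (b 1), s2 • v.mulVec (b 2)] 2) := by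
      rw [act_prodv, hu1, prodv_smul_left, ← prodv_smul_right]
      simp [targetFam]
    have P2 : proj (act u v (prodv (a 2) (b 2))) = proj (targetFam ![s1 • v.mulVec (b 1), s2 • v.mulVec (b 2)] 3) := by
      rw [act_prodv, hu2, prodv_smul_left, ← prodv_smul_right]
      simp [targetFam]
    have hFG : (fun c => proj (act u v (prodv (a c) (b c)))) =
        (fun c => proj (targetFam ![s1 • v.mulVec (b 1), s2 • v.mulVec (b 2)] c)) ∘ (![0, 2, 3, 1] : Fin 4 → Fin 4) := by
      funext c
      fin_cases c
      · exact P0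
      · exact P1
      · exact P2
      · exact P3
    rw [hFG]
    exact Function.Surjective.range_comp (by decide) _

lemma main_perm (φ : Fin 4 → V2) (a b : Fin 4 → Fin 2 → ℂ)
    (hab : ∀ c, φ c = prodv (a c) (b c))
    (horth : ∀ c c', ip2 (φ c) (φ c') = if c = c' then 1 else 0)
    (ρ : Fin 4 → Fin 4) (hinj : Function.Injective ρ) (hsurj : Function.Surjective ρ)
    (h1 : ip (a (ρ 0)) (a (ρ 1)) = 0) (h2 : ip (a (ρ 0)) (a (ρ 2)) = 0) :
    ∃ e : Fin 2 → Fin 2 → ℂ,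
      (∀ i j, ip (e i) (e j) = if i = j then 1 else 0) ∧
      ∃ u v : Matrix (Fin 2) (Fin 2) ℂ, uᴴ * u = 1 ∧ vᴴ * v = 1 ∧
        (Set.range fun c => proj (act u v (φ c))) =
          Set.range fun c => proj (targetFam e c) := by
  obtain ⟨e, he, u, v, hu, hv, hr⟩ := main_lemma (a ∘ ρ) (b ∘ ρ)
    (fun c c' => by
      simp only [Function.comp_apply, ← hab, horth, hinj.eq_iff]) h1 h2
  refine ⟨e, he, u, v, hu, hv, ?_⟩
  have hcomp : (fun c => proj (act u v (prodv ((a ∘ ρ) c) ((b ∘ ρ) c)))) =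
      (fun c => proj (act u v (φ c))) ∘ ρ := by
    funext c; simp [Function.comp_apply, hab]
  calc Set.range (fun c => proj (act u v (φ c)))
      = Set.range ((fun c => proj (act u v (φ c))) ∘ ρ) := (hsurj.range_comp _).symm
    _ = _ := by rw [← hcomp]; exact hr

theorem product_basis_classification (φ : Fin 4 → V2)
    (horth : ∀ c c', ∑ p : Fin 2 × Fin 2, star (φ c p) * φ c' p = if c = c' then 1 else 0)
    (hprod : ∀ c, ∃ u v : Fin 2 → ℂ, φ c = prodv u v) :
    ∃ e : Fin 2 → Fin 2 → ℂ,
      (∀ i j, ∑ p : Fin 2, star (e i p) * e j p = if i = j then 1 else 0) ∧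
      ∃ u v : Matrix (Fin 2) (Fin 2) ℂ, uᴴ * u = 1 ∧ vᴴ * v = 1 ∧
        (((Set.range fun c => proj (act u v (φ c))) =
            Set.range fun c => proj (targetFam e c)) ∨
          ((Set.range fun c => proj (act u v (swapV (φ c)))) =
            Set.range fun c => proj (targetFam e c))) := by
  choose a b hab using hprod
  have horth' : ∀ c c', ip2 (φ c) (φ c') = if c = c' then 1 else 0 := horth
  have horthS : ∀ c c', ip2 (swapV (φ c)) (swapV (φ c')) = if c = c' then 1 else 0 :=
    fun c c' => by rw [ip2_swap]; exact horth' c c'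
  have habS : ∀ c, swapV (φ c) = prodv (b c) (a c) := fun c => by rw [hab, swapV_prodv]
  have hd : ∀ c c', c ≠ c' → ip (a c) (a c') = 0 ∨ ip (b c) (b c') = 0 := fun c c' h => by
    have := horth' c c'; rw [hab, hab, prod_ip, if_neg h] at this; exact mul_eq_zero.1 this
  have finA : ∀ ρ : Fin 4 → Fin 4, Function.Injective ρ → Function.Surjective ρ →
      ip (a (ρ 0)) (a (ρ 1)) = 0 → ip (a (ρ 0)) (a (ρ 2)) = 0 →
      ∃ e : Fin 2 → Fin 2 → ℂ,
      (∀ i j, ∑ p : Fin 2, star (e i p) * e j p = if i = j then 1 else 0) ∧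
      ∃ u v : Matrix (Fin 2) (Fin 2) ℂ, uᴴ * u = 1 ∧ vᴴ * v = 1 ∧
        (((Set.range fun c => proj (act u v (φ c))) =
            Set.range fun c => proj (targetFam e c)) ∨
          ((Set.range fun c => proj (act u v (swapV (φ c)))) =
            Set.range fun c => proj (targetFam e c))) := by
    intro ρ hinj hsurj h1 h2
    obtain ⟨e, he, u, v, hu, hv, hr⟩ := main_perm φ a b hab horth' ρ hinj hsurj h1 h2
    exact ⟨e, he, u, v, hu, hv, Or.inl hr⟩
  have finB : ∀ ρ : Fin 4 → Fin 4, Function.Injective ρ → Function.Surjective ρ →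
      ip (b (ρ 0)) (b (ρ 1)) = 0 → ip (b (ρ 0)) (b (ρ 2)) = 0 →
      ∃ e : Fin 2 → Fin 2 → ℂ,
      (∀ i j, ∑ p : Fin 2, star (e i p) * e j p = if i = j then 1 else 0) ∧
      ∃ u v : Matrix (Fin 2) (Fin 2) ℂ, uᴴ * u = 1 ∧ vᴴ * v = 1 ∧
        (((Set.range fun c => proj (act u v (φ c))) =
            Set.range fun c => proj (targetFam e c)) ∨
          ((Set.range fun c => proj (act u v (swapV (φ c)))) =
            Set.range fun c => proj (targetFam e c))) := by
    intro ρ hinj hsurj h1 h2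
    obtain ⟨e, he, u, v, hu, hv, hr⟩ :=
      main_perm (fun c => swapV (φ c)) b a (fun c => habS c) horthS ρ hinj hsurj h1 h2
    exact ⟨e, he, u, v, hu, hv, Or.inr hr⟩
  rcases hd 0 1 (by decide) with hA1 | hB1
  · rcases hd 0 2 (by decide) with hA2 | hB2
    · exact finA ![0, 1, 2, 3] (by decide) (by decide) hA1 hA2
    · rcases hd 0 3 (by decide) with hA3 | hB3
      · exact finA ![0, 1, 3, 2] (by decide) (by decide) hA1 hA3
      · exact finB ![0, 2, 3, 1] (by decide) (by decide) hB2 hB3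
  · rcases hd 0 2 (by decide) with hA2 | hB2
    · rcases hd 0 3 (by decide) with hA3 | hB3
      · exact finA ![0, 2, 3, 1] (by decide) (by decide) hA2 hA3
      · exact finB ![0, 1, 3, 2] (by decide) (by decide) hB1 hB3
    · exact finB ![0, 1, 2, 3] (by decide) (by decide) hB1 hB2
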